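/- Let X ~ Bernoulli(p) and Z ~ Bernoulli(p') be independent random variables with 0 < p < 1 and 0 < p' ≤ 1, and set Y = XZ. Then ξ(X,Y) = p'(1-p)/(1 - pp'), where ξ(X,Y) = (∫ Var(E[1_{Y ≥ t} | X]) dμ(t)) / (∫ Var(1_{Y ≥ t}) dμ(t)) and μ is the law of Y. -/

import Mathlib

open MeasureTheory ProbabilityTheory

lemma my_variance_congr {Ω : Type*} {m : MeasurableSpace Ω} {μ : Measure Ω} {f g : Ω → ℝ}
    (h : f =ᵐ[μ] g) : variance f μ = variance g μ := by
  unfold ProbabilityTheory.variance ProbabilityTheory.evariance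
  rw [integral_congr_ae h]
  congr 1
  apply lintegral_congr_ae
  filter_upwards [h] with ω hω
  rw [hω]

lemma my_variance_const {Ω : Type*} {m : MeasurableSpace Ω} {μ : Measure Ω}
    [IsProbabilityMeasure μ] (c : ℝ) : variance (fun _ => c) μ = 0 := by
  unfold ProbabilityTheory.variance ProbabilityTheory.evariance
  simp

lemma my_variance_indicator {Ω : Type*} [MeasureSpace Ω] [IsProbabilityMeasure (ℙ : Measure Ω)]
    {A : Set Ω} (hA : MeasurableSet A) :
    variance (A.indicator (fun _ => (1:ℝ))) ℙ = (ℙ A).toReal - (ℙ A).toReal ^ 2 := by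
  have hmem : MemLp (A.indicator (fun _ => (1:ℝ))) 2 ℙ :=
    memLp_indicator_const 2 hA 1 (Or.inr (measure_ne_top _ _))
  rw [variance_eq_sub hmem]
  have hsq : (A.indicator (fun _ => (1:ℝ))) ^ 2 = A.indicator (fun _ => (1:ℝ)) := by
    classical
    ext ω; by_cases h : ω ∈ A <;> simp [h]
  have hint : ∫ ω, A.indicator (fun _ => (1:ℝ)) ω ∂ℙ = (ℙ A).toReal := by
    rw [integral_indicator_const (1:ℝ) hA]; simp [measureReal_def]
  rw [hsq]
  simp only [hint]

lemma my_integrable_dirac {α : Type*} [MeasurableSpace α] [MeasurableSingletonClass α]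
    (g : α → ℝ) (a : α) : Integrable g (Measure.dirac a) := by
  refine (integrable_const (g a)).congr ?_
  rw [Filter.EventuallyEq, ae_dirac_eq]
  exact Filter.eventually_pure.2 rfl

lemma ae_zero_or_one {Ω : Type*} [MeasureSpace Ω] [IsProbabilityMeasure (ℙ : Measure Ω)]
    (X : Ω → ℝ) (hX : Measurable X) (p : ℝ) (hp0 : 0 ≤ p) (hp1 : p ≤ 1)
    (h1 : ℙ {ω | X ω = 1} = ENNReal.ofReal p)
    (h0 : ℙ {ω | X ω = 0} = ENNReal.ofReal (1 - p)) :
    ∀ᵐ ω ∂(ℙ : Measure Ω), X ω = 0 ∨ X ω = 1 := by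
  have hm0 : MeasurableSet {ω | X ω = 0} := hX (measurableSet_singleton 0)
  have hm1 : MeasurableSet {ω | X ω = 1} := hX (measurableSet_singleton 1)
  have hdisj : Disjoint {ω | X ω = 0} {ω | X ω = 1} := by
    rw [Set.disjoint_left]
    intro ω hω0 hω1
    simp only [Set.mem_setOf_eq] at hω0 hω1
    rw [hω0] at hω1; norm_num at hω1
  have hunion : ℙ ({ω | X ω = 0} ∪ {ω | X ω = 1}) = 1 := by
    rw [measure_union hdisj hm1, h0, h1, ← ENNReal.ofReal_add (by linarith) hp0]
    norm_num
  have := prob_compl_eq_zero_iff (hm0.union hm1) |>.2 hunion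
  rw [ae_iff]
  exact this

lemma my_integrable_ite {Ω : Type*} [MeasureSpace Ω] [IsProbabilityMeasure (ℙ : Measure Ω)]
    {f : Ω → ℝ} (hf : Measurable f) (hb : ∀ ω, ‖f ω‖ ≤ 1) : Integrable f ℙ :=
  (integrable_const 1).mono' hf.aestronglyMeasurable (Filter.Eventually.of_forall hb)

theorem stmt_14 {Ω : Type*} [MeasureSpace Ω] [IsProbabilityMeasure (ℙ : Measure Ω)]
    (X Z : Ω → ℝ) (hX : Measurable X) (hZ : Measurable Z)
    (p p' : ℝ) (hp0 : 0 < p) (hp1 : p < 1) (hp'0 : 0 < p') (hp'1 : p' ≤ 1)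
    (hXlaw1 : ℙ {ω | X ω = 1} = ENNReal.ofReal p)
    (hXlaw0 : ℙ {ω | X ω = 0} = ENNReal.ofReal (1 - p))
    (hZlaw1 : ℙ {ω | Z ω = 1} = ENNReal.ofReal p')
    (hZlaw0 : ℙ {ω | Z ω = 0} = ENNReal.ofReal (1 - p'))
    (hindep : IndepFun X Z ℙ)
    (Y : Ω → ℝ) (hY : Y = fun ω => X ω * Z ω) :
    (∫ t, variance (ℙ[fun ω => if t ≤ Y ω then (1 : ℝ) else 0
            | MeasurableSpace.comap X inferInstance]) ℙ ∂(Measure.map Y ℙ))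
        / (∫ t, variance (fun ω => if t ≤ Y ω then (1 : ℝ) else 0) ℙ
            ∂(Measure.map Y ℙ))
      = p' * (1 - p) / (1 - p * p') := by
  subst hY
  set q : ℝ := p * p' with hqdef
  have hq0 : 0 < q := mul_pos hp0 hp'0
  have hq1 : q < 1 := by nlinarith
  have hYm : Measurable fun ω => X ω * Z ω := hX.mul hZ
  have hX01 := ae_zero_or_one X hX p hp0.le hp1.le hXlaw1 hXlaw0
  have hZ01 := ae_zero_or_one Z hZ p' hp'0.le hp'1 hZlaw1 hZlaw0
  set A : Set Ω := {ω | (1:ℝ) ≤ X ω * Z ω} with hAdef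
  have hAm : MeasurableSet A := measurableSet_le measurable_const hYm
  have hAeq : A =ᵐ[ℙ] (((X ⁻¹' {1}) ∩ (Z ⁻¹' {1}) : Set Ω)) := by
    rw [Filter.eventuallyEq_set]
    filter_upwards [hX01, hZ01] with ω hx hz
    simp only [hAdef, Set.mem_setOf_eq, Set.mem_inter_iff, Set.mem_preimage,
      Set.mem_singleton_iff]
    constructor
    · intro h
      rcases hx with hx | hx <;> rcases hz with hz | hz <;>
        (revert h; norm_num [hx, hz])
    · rintro ⟨h1, h2⟩; rw [h1, h2]; norm_num
  have hPA : ℙ A = ENNReal.ofReal q := by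
    rw [measure_congr hAeq,
      hindep.measure_inter_preimage_eq_mul {1} {1} (measurableSet_singleton 1) (measurableSet_singleton 1)]
    have e1 : X ⁻¹' {1} = {ω | X ω = 1} := rfl
    have e2 : Z ⁻¹' {1} = {ω | Z ω = 1} := rfl
    rw [e1, e2, hXlaw1, hZlaw1, ← ENNReal.ofReal_mul hp0.le]
  have hPAc : ℙ Aᶜ = ENNReal.ofReal (1 - q) := by
    rw [measure_compl hAm (measure_ne_top _ _), hPA, measure_univ,
      ENNReal.ofReal_sub 1 hq0.le, ENNReal.ofReal_one]
  -- identification of the law of Y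
  have hMap : Measure.map (fun ω => X ω * Z ω) ℙ
      = ENNReal.ofReal (1 - q) • Measure.dirac (0:ℝ)
        + ENNReal.ofReal q • Measure.dirac (1:ℝ) := by
    ext s hs
    rw [Measure.map_apply hYm hs, Measure.add_apply, Measure.smul_apply, Measure.smul_apply,
      Measure.dirac_apply' _ hs, Measure.dirac_apply' _ hs]
    by_cases h0 : (0:ℝ) ∈ s <;> by_cases h1 : (1:ℝ) ∈ s
    · have hpre : (fun ω => X ω * Z ω) ⁻¹' s =ᵐ[ℙ] Set.univ := by
        rw [Filter.eventuallyEq_set]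
        filter_upwards [hX01, hZ01] with ω hx hz
        simp only [Set.mem_preimage, Set.mem_univ, iff_true]
        rcases hx with hx | hx <;> rcases hz with hz | hz <;> simp [hx, hz, h0, h1]
      rw [measure_congr hpre, measure_univ]
      simp only [Set.indicator_of_mem h0, Set.indicator_of_mem h1, Pi.one_apply, smul_eq_mul,
        mul_one]
      rw [← ENNReal.ofReal_add (by linarith) hq0.le]
      norm_num
    · have hpre : (fun ω => X ω * Z ω) ⁻¹' s =ᵐ[ℙ] (Aᶜ : Set Ω) := by
        rw [Filter.eventuallyEq_set]
        filter_upwards [hX01, hZ01] with ω hx hz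
        have hmem : ω ∈ Aᶜ ↔ ¬ (1 ≤ X ω * Z ω) := Iff.rfl
        rw [Set.mem_preimage, hmem]
        rcases hx with hx | hx <;> rcases hz with hz | hz <;> rw [hx, hz] <;>
          norm_num [h0, h1]
      rw [measure_congr hpre, hPAc]
      simp only [Set.indicator_of_mem h0, Set.indicator_of_notMem h1, Pi.one_apply,
        smul_eq_mul, mul_one, mul_zero, add_zero]
    · have hpre : (fun ω => X ω * Z ω) ⁻¹' s =ᵐ[ℙ] A := by
        rw [Filter.eventuallyEq_set]
        filter_upwards [hX01, hZ01] with ω hx hz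
        have hmem : ω ∈ A ↔ (1 ≤ X ω * Z ω) := Iff.rfl
        rw [Set.mem_preimage, hmem]
        rcases hx with hx | hx <;> rcases hz with hz | hz <;> rw [hx, hz] <;>
          norm_num [h0, h1]
      rw [measure_congr hpre, hPA]
      simp only [Set.indicator_of_notMem h0, Set.indicator_of_mem h1, Pi.one_apply,
        smul_eq_mul, mul_one, mul_zero, zero_add]
    · have hpre : (fun ω => X ω * Z ω) ⁻¹' s =ᵐ[ℙ] (∅ : Set Ω) := by
        rw [Filter.eventuallyEq_set]
        filter_upwards [hX01, hZ01] with ω hx hz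
        simp only [Set.mem_preimage, Set.mem_empty_iff_false, iff_false]
        rcases hx with hx | hx <;> rcases hz with hz | hz <;> simp [hx, hz, h0, h1]
      rw [measure_congr hpre, measure_empty]
      simp [Set.indicator_of_notMem h0, Set.indicator_of_notMem h1]
  -- integral against the law
  have hint : ∀ g : ℝ → ℝ, (∫ t, g t ∂(Measure.map (fun ω => X ω * Z ω) ℙ))
      = (1 - q) * g 0 + q * g 1 := by
    intro g
    rw [hMap, integral_add_measure
        ((my_integrable_dirac g 0).smul_measure ENNReal.ofReal_ne_top)
        ((my_integrable_dirac g 1).smul_measure ENNReal.ofReal_ne_top),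
      integral_smul_measure, integral_smul_measure, integral_dirac, integral_dirac,
      ENNReal.toReal_ofReal (by linarith : (0:ℝ) ≤ 1 - q), ENNReal.toReal_ofReal hq0.le]
    simp [smul_eq_mul]
  -- σ-algebra inequality
  have hm : MeasurableSpace.comap X inferInstance ≤ (inferInstance : MeasurableSpace Ω) :=
    hX.comap_le
  -- the t = 0 integrand is a.e. 1
  have hf0 : (fun ω => if (0:ℝ) ≤ X ω * Z ω then (1:ℝ) else 0) =ᵐ[ℙ] fun _ => 1 := by
    filter_upwards [hX01, hZ01] with ω hx hz
    rcases hx with hx | hx <;> rcases hz with hz | hz <;> rw [hx, hz] <;> norm_num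
  have hind1 : (fun ω => if (1:ℝ) ≤ X ω * Z ω then (1:ℝ) else 0)
      = A.indicator (fun _ => (1:ℝ)) := by
    ext ω
    by_cases h : (1:ℝ) ≤ X ω * Z ω
    · rw [if_pos h, Set.indicator_of_mem (show ω ∈ A from h)]
    · rw [if_neg h, Set.indicator_of_notMem (show ω ∉ A from h)]
  have hD1 : variance (fun ω => if (1:ℝ) ≤ X ω * Z ω then (1:ℝ) else 0) ℙ = q - q ^ 2 := by
    rw [hind1, my_variance_indicator hAm, hPA, ENNReal.toReal_ofReal hq0.le]
  have hD0 : variance (fun ω => if (0:ℝ) ≤ X ω * Z ω then (1:ℝ) else 0) ℙ = 0 := by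
    rw [my_variance_congr hf0, my_variance_const]
  have hN0 : variance (ℙ[fun ω => if (0:ℝ) ≤ X ω * Z ω then (1:ℝ) else 0
      | MeasurableSpace.comap X inferInstance]) ℙ = 0 := by
    have h1 : ℙ[fun ω => if (0:ℝ) ≤ X ω * Z ω then (1:ℝ) else 0
        | MeasurableSpace.comap X inferInstance] =ᵐ[ℙ] fun _ => 1 := by
      refine (condExp_congr_ae hf0).trans ?_
      rw [condExp_const hm]
    rw [my_variance_congr h1, my_variance_const]
  -- the t = 1 integrand
  have hφ : Measurable fun x : ℝ => if x = 1 then (1:ℝ) else 0 :=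
    Measurable.ite (measurableSet_eq) measurable_const measurable_const
  have hφm : Measurable[MeasurableSpace.comap X inferInstance] X := fun s hs => ⟨s, hs, rfl⟩
  have hφX : StronglyMeasurable[MeasurableSpace.comap X inferInstance]
      fun ω => if X ω = 1 then (1:ℝ) else 0 := (hφ.comp hφm).stronglyMeasurable
  have hψZm : Measurable fun ω => if Z ω = 1 then (1:ℝ) else 0 := hφ.comp hZ
  have hψZint : Integrable (fun ω => if Z ω = 1 then (1:ℝ) else 0) ℙ :=
    my_integrable_ite hψZm (fun ω => by simp only [Real.norm_eq_abs]; split_ifs <;> norm_num)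
  have hprod_meas : Measurable fun ω =>
      (if X ω = 1 then (1:ℝ) else 0) * (if Z ω = 1 then (1:ℝ) else 0) :=
    (hφ.comp hX).mul hψZm
  have hprod_int : Integrable ((fun ω => if X ω = 1 then (1:ℝ) else 0)
      * fun ω => if Z ω = 1 then (1:ℝ) else 0) ℙ :=
    my_integrable_ite hprod_meas (fun ω => by simp only [Pi.mul_apply, Real.norm_eq_abs]; split_ifs <;> norm_num)
  have hf1 : (fun ω => if (1:ℝ) ≤ X ω * Z ω then (1:ℝ) else 0)
      =ᵐ[ℙ] ((fun ω => if X ω = 1 then (1:ℝ) else 0)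
        * fun ω => if Z ω = 1 then (1:ℝ) else 0) := by
    filter_upwards [hX01, hZ01] with ω hx hz
    show _ = (if X ω = 1 then (1:ℝ) else 0) * (if Z ω = 1 then (1:ℝ) else 0)
    rcases hx with hx | hx <;> rcases hz with hz | hz <;> rw [hx, hz] <;> norm_num
  have hIndep' : ProbabilityTheory.Indep (MeasurableSpace.comap Z inferInstance)
      (MeasurableSpace.comap X inferInstance) ℙ :=
    (ProbabilityTheory.IndepFun_iff_Indep Z X ℙ).1 hindep.symm
  have hZcm : Measurable[MeasurableSpace.comap Z inferInstance] Z := fun s hs => ⟨s, hs, rfl⟩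
  have hψZsm : StronglyMeasurable[MeasurableSpace.comap Z inferInstance]
      fun ω => if Z ω = 1 then (1:ℝ) else 0 :=
    (hφ.comp hZcm).stronglyMeasurable
  have hintZ : ∫ ω, (if Z ω = 1 then (1:ℝ) else 0) ∂ℙ = p' := by
    have e : (fun ω => if Z ω = 1 then (1:ℝ) else 0)
        = ({ω | Z ω = 1}).indicator (fun _ => (1:ℝ)) := by
      ext ω
      by_cases h : Z ω = 1
      · rw [if_pos h, Set.indicator_of_mem (show ω ∈ {ω | Z ω = 1} from h)]
      · rw [if_neg h, Set.indicator_of_notMem (show ω ∉ {ω | Z ω = 1} from h)]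
    rw [e, integral_indicator_const (1:ℝ)
        (show MeasurableSet {ω | Z ω = 1} from hZ (measurableSet_singleton 1)), measureReal_def, hZlaw1,
      ENNReal.toReal_ofReal hp'0.le, smul_eq_mul, mul_one]
  have hcondZ : ℙ[(fun ω => if Z ω = 1 then (1:ℝ) else 0)
      | MeasurableSpace.comap X inferInstance] =ᵐ[ℙ] fun _ => p' := by
    refine (condExp_indep_eq (hZ.comap_le) (hX.comap_le) hψZsm hIndep').trans ?_
    rw [show (ℙ[fun ω => if Z ω = 1 then (1:ℝ) else 0] : ℝ) = p' from hintZ]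
  have hmul := condExp_mul_of_stronglyMeasurable_left hφX hprod_int hψZint
  have hcond1 : ℙ[fun ω => if (1:ℝ) ≤ X ω * Z ω then (1:ℝ) else 0
      | MeasurableSpace.comap X inferInstance]
      =ᵐ[ℙ] fun ω => (if X ω = 1 then (1:ℝ) else 0) * p' := by
    refine (condExp_congr_ae hf1).trans (hmul.trans ?_)
    filter_upwards [hcondZ] with ω hω
    simp only [Pi.mul_apply]
    rw [hω]
  have hN1 : variance (ℙ[fun ω => if (1:ℝ) ≤ X ω * Z ω then (1:ℝ) else 0
      | MeasurableSpace.comap X inferInstance]) ℙ = p' ^ 2 * (p - p ^ 2) := by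
    rw [my_variance_congr hcond1]
    have e : (fun ω => (if X ω = 1 then (1:ℝ) else 0) * p')
        = p' • fun ω => if X ω = 1 then (1:ℝ) else 0 := by
      ext ω; simp [mul_comm]
    rw [e, variance_smul]
    have e2 : (fun ω => if X ω = 1 then (1:ℝ) else 0)
        = ({ω | X ω = 1}).indicator (fun _ => (1:ℝ)) := by
      ext ω
      by_cases h : X ω = 1
      · rw [if_pos h, Set.indicator_of_mem (show ω ∈ {ω | X ω = 1} from h)]
      · rw [if_neg h, Set.indicator_of_notMem (show ω ∉ {ω | X ω = 1} from h)]
    rw [e2, my_variance_indicator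
        (show MeasurableSet {ω | X ω = 1} from hX (measurableSet_singleton 1)), hXlaw1,
      ENNReal.toReal_ofReal hp0.le]
  -- put everything together
  simp only [hint, hN0, hN1, hD0, hD1]
  have hden1 : (1 - q) * 0 + q * (q - q ^ 2) > 0 := by
    nlinarith [mul_pos (mul_pos hq0 hq0) (sub_pos.mpr hq1)]
  have hden2 : (1:ℝ) - q > 0 := by linarith
  rw [div_eq_div_iff (ne_of_gt hden1) (ne_of_gt hden2), hqdef]
  ring
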